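/- Let Γ_0 ⊆ Γ and Γ'_0 ⊆ Γ' be induced subgraphs of graphs Γ and Γ'. Suppose φ_0 : G_{Γ_0} → G_{Γ'_0} is a continuous isomorphism and f : Γ' → Γ is a graph isomorphism such that φ_0(ker(π_{f(w)})) = ker(π_w) for every vertex w of Γ'_0. Then there is a continuous isomorphism φ : G_Γ → G_{Γ'} such that φ(ker(π_{f(w)})) = ker(π_w) for every vertex w of Γ' and π_{Γ'_0} ∘ φ = φ_0 ∘ π_{Γ_0}, where π_{Γ_0} : G_Γ → G_{Γ_0} and π_{Γ'_0} : G_{Γ'} → G_{Γ'_0} are the coordinate projections. -/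

import Mathlib

open Function

noncomputable section

/-- A discrete group is a topological group. -/
instance (priority := 50) discreteTopologicalGroup (G : Type*) [Group G] [TopologicalSpace G]
    [DiscreteTopology G] : IsTopologicalGroup G where
  continuous_mul := continuous_of_discreteTopology
  continuous_inv := continuous_of_discreteTopology

/-- The sign epimorphism `τ : D_p → C_2 = {±1}` killing the rotations. -/
def dihedralSign (p : ℕ) : DihedralGroup p →* ℤˣ where
  toFun x := match x with
    | DihedralGroup.r _ => 1
    | DihedralGroup.sr _ => -1
  map_one' := rfl
  map_mul' a b := by cases a <;> cases b <;> rfl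

/-- `{±1}` acts on a commutative group by exponentiation (i.e. `-1` acts by inversion). -/
def unitsIntAut (A : Type*) [CommGroup A] : ℤˣ →* MulAut A where
  toFun u :=
    { toFun := fun x => x ^ (u : ℤ)
      invFun := fun x => x ^ (u : ℤ)
      left_inv := fun x => by rcases Int.units_eq_one_or u with h | h <;> simp [h]
      right_inv := fun x => by rcases Int.units_eq_one_or u with h | h <;> simp [h]
      map_mul' := fun x y => mul_zpow x y _ }
  map_one' := by ext x; simp
  map_mul' u v := by
    ext x
    rcases Int.units_eq_one_or u with h | h <;>
      rcases Int.units_eq_one_or v with h' | h' <;>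
        simp [h, h']

/-- The action of `D_p × D_p` on `C_q` given by `(x,y) · g = g^(τ(x)τ(y))`. -/
def Wact (p q : ℕ) : DihedralGroup p × DihedralGroup p →* MulAut (Multiplicative (ZMod q)) :=
  (unitsIntAut (Multiplicative (ZMod q))).comp
    (((dihedralSign p).comp (MonoidHom.fst _ _)) * ((dihedralSign p).comp (MonoidHom.snd _ _)))

/-- The group `W = C_q ⋊ (D_p × D_p)`. -/
abbrev Wgrp (p q : ℕ) : Type :=
  SemidirectProduct (Multiplicative (ZMod q)) (DihedralGroup p × DihedralGroup p) (Wact p q)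

/-- The quotient map `λ : W → D_p × D_p`. -/
abbrev lamW (p q : ℕ) : Wgrp p q →* DihedralGroup p × DihedralGroup p :=
  SemidirectProduct.rightHom

/-- The group `G_Γ ≤ D_p^V × W^R` associated to a graph `Γ = (V, R)`. -/
def GGamma (p q : ℕ) (V : Type*) (R : Set (V × V)) :
    Subgroup ((V → DihedralGroup p) × (R → Wgrp p q)) where
  carrier := {x | ∀ r : R,
    SemidirectProduct.rightHom (x.2 r) = (x.1 (r : V × V).1, x.1 (r : V × V).2)}
  one_mem' := by intro r; simp; rfl
  mul_mem' := by
    intro a b ha hb r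
    simp only [Set.mem_setOf_eq] at ha hb
    simp only [Prod.snd_mul, Pi.mul_apply, map_mul, Prod.fst_mul, ha r, hb r, Prod.mk_mul_mk]
  inv_mem' := by
    intro a ha r
    simp only [Set.mem_setOf_eq] at ha
    simp only [Prod.snd_inv, Pi.inv_apply, map_inv, Prod.fst_inv, ha r, Prod.inv_mk]

instance (n : ℕ) : TopologicalSpace (DihedralGroup n) := ⊥
instance (n : ℕ) : DiscreteTopology (DihedralGroup n) := ⟨rfl⟩
instance (p q : ℕ) : TopologicalSpace (Wgrp p q) := ⊥
instance (p q : ℕ) : DiscreteTopology (Wgrp p q) := ⟨rfl⟩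

variable (p q : ℕ) (V : Type*) (R : Set (V × V))

/-- The coordinate projection `π_v : G_Γ → D_p` at a vertex `v`. -/
def vProj (v : V) : ↥(GGamma p q V R) →* DihedralGroup p :=
  (Pi.evalMonoidHom (fun _ : V => DihedralGroup p) v).comp
    ((MonoidHom.fst _ _).comp (GGamma p q V R).subtype)

/-- The coordinate projection `π_r : G_Γ → W` at an edge `r`. -/
def eProj (r : R) : ↥(GGamma p q V R) →* Wgrp p q :=
  (Pi.evalMonoidHom (fun _ : R => Wgrp p q) r).comp
    ((MonoidHom.snd _ _).comp (GGamma p q V R).subtype)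

variable (I : Type*)

/-- The coordinate projection `π_v : G_Γ × C_2^I → D_p` at a vertex `v`. -/
def vProjK (v : V) : (↥(GGamma p q V R) × (I → ℤˣ)) →* DihedralGroup p :=
  (vProj p q V R v).comp (MonoidHom.fst _ _)

/-- The coordinate projection `π_r : G_Γ × C_2^I → W` at an edge `r`. -/
def eProjK (r : R) : (↥(GGamma p q V R) × (I → ℤˣ)) →* Wgrp p q :=
  (eProj p q V R r).comp (MonoidHom.fst _ _)

/-- The map `ξ_Γ : G_Γ → C_2^V`, `((a_v), (b_r)) ↦ (τ(a_v))_v`. -/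
def xiGamma : ↥(GGamma p q V R) →* (V → ℤˣ) :=
  Pi.monoidHom fun v => (dihedralSign p).comp (vProj p q V R v)

end
noncomputable section
variable (p q : ℕ) (V : Type*) (R : Set (V × V))

/-- The edge set of the induced subgraph on a set `V₀` of vertices. -/
def inducedR (V0 : Set V) : Set (↥V0 × ↥V0) := {e | ((e.1 : V), (e.2 : V)) ∈ R}

/-- The coordinate projection `π_{Γ₀} : G_Γ → G_{Γ₀}` onto the group of an induced
subgraph. -/
def projGGamma (V0 : Set V) :
    ↥(GGamma p q V R) →* ↥(GGamma p q ↥V0 (inducedR V R V0)) :=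
  MonoidHom.codRestrict
    ((MonoidHom.prod
      ((Pi.monoidHom fun v : ↥V0 =>
        Pi.evalMonoidHom (fun _ : V => DihedralGroup p) (v : V)).comp (MonoidHom.fst _ _))
      ((Pi.monoidHom fun e : inducedR V R V0 =>
        Pi.evalMonoidHom (fun _ : R => Wgrp p q)
          (⟨(((e : ↥V0 × ↥V0).1 : V), ((e : ↥V0 × ↥V0).2 : V)), e.2⟩ : R)).comp
        (MonoidHom.snd _ _))).comp (GGamma p q V R).subtype)
    (GGamma p q ↥V0 (inducedR V R V0))
    (fun x => by
      intro e
      exact x.2 ⟨(((e : ↥V0 × ↥V0).1 : V), ((e : ↥V0 × ↥V0).2 : V)), e.2⟩)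
end
noncomputable section Ext

open SemidirectProduct
attribute [local instance] Classical.propDecidable

variable {p q : ℕ} {V V' : Type*} {R : Set (V × V)} {R' : Set (V' × V')}
  {V0 : Set V} {V0' : Set V'}

/-- Vertex part of the extended map. -/
def extA (f : V' ≃ V) (hf0 : ∀ w : V', w ∈ V0' → f w ∈ V0)
    (ψ : ↥(GGamma p q ↥V0 (inducedR V R V0)) →* ↥(GGamma p q ↥V0' (inducedR V' R' V0')))
    (x : ↥(GGamma p q V R)) : V' → DihedralGroup p := fun w =>
  if h : w ∈ V0' then ((ψ (projGGamma p q V R V0 x)) : _).1.1 ⟨w, h⟩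
  else (x : _).1.1 (f w)

/-- Edge part of the extended map. -/
def extB (f : V' ≃ V) (hfR : ∀ a b : V', (a, b) ∈ R' ↔ (f a, f b) ∈ R)
    (hf0 : ∀ w : V', w ∈ V0' → f w ∈ V0)
    (ψ : ↥(GGamma p q ↥V0 (inducedR V R V0)) →* ↥(GGamma p q ↥V0' (inducedR V' R' V0')))
    (x : ↥(GGamma p q V R)) : R' → Wgrp p q := fun r =>
  if h : (r : V' × V').1 ∈ V0' ∧ (r : V' × V').2 ∈ V0' then
    ((ψ (projGGamma p q V R V0 x)) : _).1.2
      ⟨(⟨(r : V' × V').1, h.1⟩, ⟨(r : V' × V').2, h.2⟩), r.2⟩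
  else
    ⟨((x : _).1.2 ⟨(f (r : V' × V').1, f (r : V' × V').2), (hfR _ _).1 r.2⟩).left,
      (extA f hf0 ψ x (r : V' × V').1, extA f hf0 ψ x (r : V' × V').2)⟩

theorem extB_right (f : V' ≃ V) (hfR : ∀ a b : V', (a, b) ∈ R' ↔ (f a, f b) ∈ R)
    (hf0 : ∀ w : V', w ∈ V0' → f w ∈ V0)
    (ψ : ↥(GGamma p q ↥V0 (inducedR V R V0)) →* ↥(GGamma p q ↥V0' (inducedR V' R' V0')))
    (x : ↥(GGamma p q V R)) (r : R') :
    SemidirectProduct.rightHom (extB f hfR hf0 ψ x r)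
      = (extA f hf0 ψ x (r : V' × V').1, extA f hf0 ψ x (r : V' × V').2) := by
  by_cases h : (r : V' × V').1 ∈ V0' ∧ (r : V' × V').2 ∈ V0'
  · rw [extB, dif_pos h]
    have := (ψ (projGGamma p q V R V0 x)).2
      ⟨(⟨(r : V' × V').1, h.1⟩, ⟨(r : V' × V').2, h.2⟩), r.2⟩
    rw [this]
    simp only [extA, dif_pos h.1, dif_pos h.2]
  · rw [extB, dif_neg h]
    rfl



section Hom

variable (f : V' ≃ V) (hfR : ∀ a b : V', (a, b) ∈ R' ↔ (f a, f b) ∈ R)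
  (hf0 : ∀ w : V', w ∈ V0' → f w ∈ V0)
  (ψ : ↥(GGamma p q ↥V0 (inducedR V R V0)) →* ↥(GGamma p q ↥V0' (inducedR V' R' V0')))
  (hsign : ∀ (y : ↥(GGamma p q ↥V0 (inducedR V R V0))) (w : V') (h : w ∈ V0'),
    dihedralSign p ((ψ y : _).1.1 ⟨w, h⟩) = dihedralSign p ((y : _).1.1 ⟨f w, hf0 w h⟩))

theorem extA_mul (x y : ↥(GGamma p q V R)) (w : V') :
    extA f hf0 ψ (x * y) w = extA f hf0 ψ x w * extA f hf0 ψ y w := by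
  by_cases h : w ∈ V0'
  · simp only [extA, dif_pos h, map_mul, MulMemClass.coe_mul, Prod.fst_mul, Pi.mul_apply]
  · simp only [extA, dif_neg h, MulMemClass.coe_mul, Prod.fst_mul, Pi.mul_apply]

include hsign in
theorem extA_sign (x : ↥(GGamma p q V R)) (w : V') :
    dihedralSign p (extA f hf0 ψ x w) = dihedralSign p ((x : _).1.1 (f w)) := by
  by_cases h : w ∈ V0'
  · rw [extA, dif_pos h, hsign]
    rfl
  · rw [extA, dif_neg h]

theorem Wact_congr {g g' : DihedralGroup p × DihedralGroup p}
    (h1 : dihedralSign p g.1 = dihedralSign p g'.1)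
    (h2 : dihedralSign p g.2 = dihedralSign p g'.2) :
    Wact p q g = Wact p q g' := by
  have e1 : Wact p q g = unitsIntAut _ (dihedralSign p g.1 * dihedralSign p g.2) := rfl
  have e2 : Wact p q g' = unitsIntAut _ (dihedralSign p g'.1 * dihedralSign p g'.2) := rfl
  rw [e1, e2, h1, h2]

include hsign in
theorem extB_mul (x y : ↥(GGamma p q V R)) (r : R') :
    extB f hfR hf0 ψ (x * y) r = extB f hfR hf0 ψ x r * extB f hfR hf0 ψ y r := by
  by_cases h : (r : V' × V').1 ∈ V0' ∧ (r : V' × V').2 ∈ V0'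
  · simp only [extB, dif_pos h, map_mul, MulMemClass.coe_mul, Prod.snd_mul, Pi.mul_apply]
  · simp only [extB, dif_neg h]
    set e : R := ⟨(f (r : V' × V').1, f (r : V' × V').2), (hfR _ _).1 r.2⟩ with he
    have hxy : ((x * y : ↥(GGamma p q V R)) : _).1.2 e = (x : _).1.2 e * (y : _).1.2 e := rfl
    have hr : ((x : _).1.2 e).right
        = ((x : _).1.1 (f (r : V' × V').1), (x : _).1.1 (f (r : V' × V').2)) := x.2 e
    ext
    · rw [SemidirectProduct.mul_left]
      show (((x * y : ↥(GGamma p q V R)) : _).1.2 e).left = _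
      rw [hxy, SemidirectProduct.mul_left, hr]
      congr 1
      rw [Wact_congr (g := ((x : _).1.1 (f (r : V' × V').1), (x : _).1.1 (f (r : V' × V').2)))
        (g' := (extA f hf0 ψ x (r : V' × V').1, extA f hf0 ψ x (r : V' × V').2))
        (extA_sign f hf0 ψ hsign x (r : V' × V').1).symm
        (extA_sign f hf0 ψ hsign x (r : V' × V').2).symm]
    · show extA f hf0 ψ (x * y) (r : V' × V').1 = _
      rw [SemidirectProduct.mul_right]
      exact extA_mul f hf0 ψ x y _
    · show extA f hf0 ψ (x * y) (r : V' × V').2 = _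
      rw [SemidirectProduct.mul_right]
      exact extA_mul f hf0 ψ x y _

/-- The extended homomorphism `G_Γ →* G_{Γ'}`. -/
def extHom : ↥(GGamma p q V R) →* ↥(GGamma p q V' R') :=
  MonoidHom.mk' (fun x => ⟨(extA f hf0 ψ x, extB f hfR hf0 ψ x),
    fun r => extB_right f hfR hf0 ψ x r⟩)
    (fun x y => by
      apply Subtype.ext
      apply Prod.ext
      · funext w
        exact extA_mul f hf0 ψ x y w
      · funext r
        exact extB_mul f hfR hf0 ψ hsign x y r)

theorem extHom_fst (x : ↥(GGamma p q V R)) (w : V') :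
    ((extHom f hfR hf0 ψ hsign x : _) : _).1.1 w = extA f hf0 ψ x w := rfl

theorem extHom_snd (x : ↥(GGamma p q V R)) (r : R') :
    ((extHom f hfR hf0 ψ hsign x : _) : _).1.2 r = extB f hfR hf0 ψ x r := rfl

theorem extHom_proj (x : ↥(GGamma p q V R)) :
    projGGamma p q V' R' V0' (extHom f hfR hf0 ψ hsign x)
      = ψ (projGGamma p q V R V0 x) := by
  apply Subtype.ext
  apply Prod.ext
  · funext w
    show extA f hf0 ψ x (w : V') = _
    rw [extA, dif_pos w.2]
  · funext e
    show extB f hfR hf0 ψ x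
      ⟨(((e : ↥V0' × ↥V0').1 : V'), ((e : ↥V0' × ↥V0').2 : V')), e.2⟩ = _
    rw [extB, dif_pos ⟨(e : ↥V0' × ↥V0').1.2, (e : ↥V0' × ↥V0').2.2⟩]

theorem extHom_continuous (hψ : Continuous ψ) :
    Continuous (extHom f hfR hf0 ψ hsign) := by
  have hproj : Continuous (fun x : ↥(GGamma p q V R) => projGGamma p q V R V0 x) := by
    apply continuous_induced_rng.2
    show Continuous fun x : ↥(GGamma p q V R) =>
      ((fun v : ↥V0 => (x : _).1.1 (v : V),
        fun e : ↥(inducedR V R V0) =>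
          (x : _).1.2 ⟨(((e : ↥V0 × ↥V0).1 : V), ((e : ↥V0 × ↥V0).2 : V)), e.2⟩) :
        (↥V0 → DihedralGroup p) × (↥(inducedR V R V0) → Wgrp p q))
    exact Continuous.prodMk
      (continuous_pi fun v => (continuous_apply _).comp
        (continuous_fst.comp continuous_subtype_val))
      (continuous_pi fun e => (continuous_apply _).comp
        (continuous_snd.comp continuous_subtype_val))
  apply Continuous.subtype_mk
  apply Continuous.prodMk
  · apply continuous_pi
    intro w
    by_cases h : w ∈ V0'
    · have : (fun x : ↥(GGamma p q V R) => extA f hf0 ψ x w)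
          = fun x => ((ψ (projGGamma p q V R V0 x)) : _).1.1 ⟨w, h⟩ := by
        funext x; rw [extA, dif_pos h]
      rw [this]
      exact (continuous_apply _).comp (continuous_fst.comp
        (continuous_subtype_val.comp (hψ.comp hproj)))
    · have : (fun x : ↥(GGamma p q V R) => extA f hf0 ψ x w)
          = fun x => (x : _).1.1 (f w) := by
        funext x; rw [extA, dif_neg h]
      rw [this]
      exact (continuous_apply _).comp (continuous_fst.comp continuous_subtype_val)
  · apply continuous_pi
    intro r
    by_cases h : (r : V' × V').1 ∈ V0' ∧ (r : V' × V').2 ∈ V0'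
    · have : (fun x : ↥(GGamma p q V R) => extB f hfR hf0 ψ x r)
          = fun x => ((ψ (projGGamma p q V R V0 x)) : _).1.2
              ⟨(⟨(r : V' × V').1, h.1⟩, ⟨(r : V' × V').2, h.2⟩), r.2⟩ := by
        funext x; rw [extB, dif_pos h]
      rw [this]
      exact (continuous_apply _).comp (continuous_snd.comp
        (continuous_subtype_val.comp (hψ.comp hproj)))
    · have heq : (fun x : ↥(GGamma p q V R) => extB f hfR hf0 ψ x r)
          = (fun cg : Multiplicative (ZMod q) × (DihedralGroup p × DihedralGroup p) =>
              (⟨cg.1, cg.2⟩ : Wgrp p q)) ∘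
            (fun x : ↥(GGamma p q V R) =>
              (((x : _).1.2 ⟨(f (r : V' × V').1, f (r : V' × V').2), (hfR _ _).1 r.2⟩).left,
               (extA f hf0 ψ x (r : V' × V').1, extA f hf0 ψ x (r : V' × V').2))) := by
        funext x; rw [extB, dif_neg h]; rfl
      rw [heq]
      apply Continuous.comp
      · exact continuous_of_discreteTopology
      · apply Continuous.prodMk
        · apply Continuous.comp (continuous_of_discreteTopology
            (f := fun u : Wgrp p q => u.left))
          exact (continuous_apply _).comp (continuous_snd.comp continuous_subtype_val)
        · apply Continuous.prodMk
          · by_cases h1 : (r : V' × V').1 ∈ V0'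
            · have : (fun x : ↥(GGamma p q V R) => extA f hf0 ψ x (r : V' × V').1)
                  = fun x => ((ψ (projGGamma p q V R V0 x)) : _).1.1 ⟨_, h1⟩ := by
                funext x; rw [extA, dif_pos h1]
              rw [this]
              exact (continuous_apply _).comp (continuous_fst.comp
                (continuous_subtype_val.comp (hψ.comp hproj)))
            · have : (fun x : ↥(GGamma p q V R) => extA f hf0 ψ x (r : V' × V').1)
                  = fun x => (x : _).1.1 (f (r : V' × V').1) := by
                funext x; rw [extA, dif_neg h1]
              rw [this]
              exact (continuous_apply _).comp (continuous_fst.comp continuous_subtype_val)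
          · by_cases h2 : (r : V' × V').2 ∈ V0'
            · have : (fun x : ↥(GGamma p q V R) => extA f hf0 ψ x (r : V' × V').2)
                  = fun x => ((ψ (projGGamma p q V R V0 x)) : _).1.1 ⟨_, h2⟩ := by
                funext x; rw [extA, dif_pos h2]
              rw [this]
              exact (continuous_apply _).comp (continuous_fst.comp
                (continuous_subtype_val.comp (hψ.comp hproj)))
            · have : (fun x : ↥(GGamma p q V R) => extA f hf0 ψ x (r : V' × V').2)
                  = fun x => (x : _).1.1 (f (r : V' × V').2) := by
                funext x; rw [extA, dif_neg h2]
              rw [this]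
              exact (continuous_apply _).comp (continuous_fst.comp continuous_subtype_val)

end Hom

section Inv

variable (f : V' ≃ V) (hfR : ∀ a b : V', (a, b) ∈ R' ↔ (f a, f b) ∈ R)
  (hf0 : ∀ w : V', w ∈ V0' → f w ∈ V0)
  (ψ : ↥(GGamma p q ↥V0 (inducedR V R V0)) →* ↥(GGamma p q ↥V0' (inducedR V' R' V0')))
  (hsign : ∀ (y : ↥(GGamma p q ↥V0 (inducedR V R V0))) (w : V') (h : w ∈ V0'),
    dihedralSign p ((ψ y : _).1.1 ⟨w, h⟩) = dihedralSign p ((y : _).1.1 ⟨f w, hf0 w h⟩))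
  (g : V ≃ V') (hgR : ∀ a b : V, (a, b) ∈ R ↔ (g a, g b) ∈ R')
  (hg0 : ∀ v : V, v ∈ V0 → g v ∈ V0')
  (ψ' : ↥(GGamma p q ↥V0' (inducedR V' R' V0')) →* ↥(GGamma p q ↥V0 (inducedR V R V0)))
  (hsign' : ∀ (y : ↥(GGamma p q ↥V0' (inducedR V' R' V0'))) (v : V) (h : v ∈ V0),
    dihedralSign p ((ψ' y : _).1.1 ⟨v, h⟩) = dihedralSign p ((y : _).1.1 ⟨g v, hg0 v h⟩))
  (hgf : ∀ v : V, f (g v) = v)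
  (hψ : ∀ y, ψ' (ψ y) = y)

include hgf hψ in
theorem ext_inverse (x : ↥(GGamma p q V R)) :
    extHom g hgR hg0 ψ' hsign' (extHom f hfR hf0 ψ hsign x) = x := by
  set X := extHom f hfR hf0 ψ hsign x with hX
  have hA : ∀ v : V, extA g hg0 ψ' X v = (x : _).1.1 v := by
    intro v
    by_cases h : v ∈ V0
    · rw [extA, dif_pos h, hX, extHom_proj f hfR hf0 ψ hsign x, hψ]
      rfl
    · have hgv : g v ∉ V0' := fun hh => h (by rw [← hgf v]; exact hf0 _ hh)
      rw [extA, dif_neg h]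
      show extA f hf0 ψ x (g v) = _
      rw [extA, dif_neg hgv, hgf]
  apply Subtype.ext
  apply Prod.ext
  · funext v
    exact hA v
  · funext r
    show extB g hgR hg0 ψ' X r = (x : _).1.2 r
    by_cases h : (r : V × V).1 ∈ V0 ∧ (r : V × V).2 ∈ V0
    · rw [extB, dif_pos h, hX, extHom_proj f hfR hf0 ψ hsign x, hψ]
      rfl
    · have hge : ¬(g (r : V × V).1 ∈ V0' ∧ g (r : V × V).2 ∈ V0') := by
        intro hh
        exact h ⟨by rw [← hgf (r : V × V).1]; exact hf0 _ hh.1,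
          by rw [← hgf (r : V × V).2]; exact hf0 _ hh.2⟩
      have hidx : (⟨(f (g (r : V × V).1), f (g (r : V × V).2)),
          (hfR _ _).1 ((hgR _ _).1 r.2)⟩ : R) = r := by
        apply Subtype.ext
        show (f (g (r : V × V).1), f (g (r : V × V).2)) = (r : V × V)
        rw [hgf, hgf]
      rw [extB, dif_neg h]
      ext
      · show (extB f hfR hf0 ψ x
            ⟨(g (r : V × V).1, g (r : V × V).2), (hgR _ _).1 r.2⟩).left = _
        rw [extB, dif_neg hge]
        show ((x : _).1.2 ⟨(f (g (r : V × V).1), f (g (r : V × V).2)),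
          (hfR _ _).1 ((hgR _ _).1 r.2)⟩).left = _
        rw [hidx]
        rfl
      · show extA g hg0 ψ' X (r : V × V).1 = _
        rw [hA]
        exact congrArg Prod.fst (x.2 r).symm
      · show extA g hg0 ψ' X (r : V × V).2 = _
        rw [hA]
        exact congrArg Prod.snd (x.2 r).symm

end Inv

end Ext

example (p q : ℕ) (V : Type) (R : Set (V × V)) (y : ↥(GGamma p q V R)) (n : ℕ) (v : V) :
    ((y ^ n : ↥(GGamma p q V R)) : _).1.1 v = ((y : _)).1.1 v ^ n := by
  rw [SubmonoidClass.coe_pow, Prod.pow_fst, Pi.pow_apply]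

theorem r_pow' (n k : ℕ) (i : ZMod n) : (DihedralGroup.r i) ^ k = DihedralGroup.r ((k : ZMod n) * i) := by
  induction k with
  | zero => simp
  | succ m ih => rw [pow_succ, ih, DihedralGroup.r_mul_r]; push_cast; ring_nf

theorem sr_pow_odd (n : ℕ) (hpo : Odd n) (j : ZMod n) :
    (DihedralGroup.sr j) ^ n = DihedralGroup.sr j := by
  obtain ⟨k, hk⟩ := hpo
  subst hk
  rw [pow_succ, pow_mul]
  have h2 : (DihedralGroup.sr j) ^ 2 = 1 := by
    rw [pow_two, DihedralGroup.sr_mul_self]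
  rw [h2, one_pow, one_mul]

theorem dsign_eq_one_iff {p : ℕ} (hpo : Odd p) (x : DihedralGroup p) :
    dihedralSign p x = 1 ↔ x ^ p = 1 := by
  cases x with
  | r i =>
    constructor
    · intro _
      rw [r_pow', ZMod.natCast_self, zero_mul, ← DihedralGroup.one_def]
    · intro _
      rfl
  | sr j =>
    constructor
    · intro h
      rw [show dihedralSign p (DihedralGroup.sr j) = -1 from rfl] at h
      exact absurd h (by decide)
    · intro h
      rw [sr_pow_odd p hpo] at h
      simp [DihedralGroup.one_def, -DihedralGroup.r_zero] at h

theorem units_int_eq {a b : ℤˣ} (h : a = 1 ↔ b = 1) : a = b := by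
  rcases Int.units_eq_one_or a with ha | ha <;> rcases Int.units_eq_one_or b with hb | hb <;>
    simp_all

theorem mult_zmod_sq {q : ℕ} (hq : q.Prime) (hqo : Odd q) {c : Multiplicative (ZMod q)}
    (h : c * c = 1) : c = 1 := by
  haveI : Fact q.Prime := ⟨hq⟩
  have h2 : (Multiplicative.toAdd c) + (Multiplicative.toAdd c) = 0 := h
  rw [← two_mul] at h2
  have h2q : (2 : ZMod q) ≠ 0 := by
    intro hh
    have : (q : ℕ) ∣ 2 := by
      have := (ZMod.natCast_eq_zero_iff 2 q).1 (by exact_mod_cast hh)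
      exact this
    have hq2 : q = 2 := (Nat.prime_dvd_prime_iff_eq hq Nat.prime_two).1 this
    rw [hq2] at hqo
    simp [Nat.odd_iff] at hqo
  have := mul_eq_zero.1 h2
  rcases this with h' | h'
  · exact absurd h' h2q
  · show Multiplicative.ofAdd (Multiplicative.toAdd c) = 1
    rw [h']
    rfl

set_option maxHeartbeats 1000000

/-- Let `Γ₀ ⊆ Γ` and `Γ'₀ ⊆ Γ'` be induced subgraphs.  Suppose
`φ₀ : G_{Γ₀} → G_{Γ'₀}` is a continuous isomorphism and `f : Γ' → Γ` a graph isomorphism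
such that `φ₀(ker π_{f(w)}) = ker π_w` for every vertex `w` of `Γ'₀`.  Then there is a
continuous isomorphism `φ : G_Γ → G_{Γ'}` with `φ(ker π_{f(w)}) = ker π_w` for every vertex
`w` of `Γ'` and `π_{Γ'₀} ∘ φ = φ₀ ∘ π_{Γ₀}`. -/
theorem statement_14 (p q : ℕ) (hp : p.Prime) (hq : q.Prime) (hpo : Odd p) (hqo : Odd q)
    (hpq : p ≠ q) (V V' : Type) (R : Set (V × V)) (R' : Set (V' × V'))
    (hloop : ∀ v : V, (v, v) ∉ R) (hor : ∀ a b : V, (a, b) ∈ R → (b, a) ∉ R)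
    (hloop' : ∀ v : V', (v, v) ∉ R') (hor' : ∀ a b : V', (a, b) ∈ R' → (b, a) ∉ R')
    (V0 : Set V) (V0' : Set V')
    (φ0 : ↥(GGamma p q ↥V0 (inducedR V R V0)) ≃* ↥(GGamma p q ↥V0' (inducedR V' R' V0')))
    (hφ0c : Continuous ⇑φ0) (hφ0cs : Continuous ⇑φ0.symm)
    (f : V' ≃ V) (hfR : ∀ a b : V', (a, b) ∈ R' ↔ (f a, f b) ∈ R)
    (hf0 : ∀ w : V', w ∈ V0' → f w ∈ V0)
    (hker0 : ∀ w : ↥V0',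
      ((vProj p q ↥V0 (inducedR V R V0) ⟨f (w : V'), hf0 w w.2⟩).ker).map φ0.toMonoidHom =
        (vProj p q ↥V0' (inducedR V' R' V0') w).ker) :
    ∃ φ : ↥(GGamma p q V R) ≃* ↥(GGamma p q V' R'),
      Continuous ⇑φ ∧ Continuous ⇑φ.symm ∧
      (∀ w : V', ((vProj p q V R (f w)).ker).map φ.toMonoidHom = (vProj p q V' R' w).ker) ∧
      ∀ x : ↥(GGamma p q V R),
        projGGamma p q V' R' V0' (φ x) = φ0 (projGGamma p q V R V0 x) := by
  -- Step A : sign compatibility for φ0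
  have hsign : ∀ (y : ↥(GGamma p q ↥V0 (inducedR V R V0))) (w : V') (h : w ∈ V0'),
      dihedralSign p ((φ0.toMonoidHom y : _).1.1 ⟨w, h⟩)
        = dihedralSign p ((y : _).1.1 ⟨f w, hf0 w h⟩) := by
    intro y w h
    apply units_int_eq
    rw [dsign_eq_one_iff hpo, dsign_eq_one_iff hpo]
    have hyp : ((y ^ p : ↥(GGamma p q ↥V0 (inducedR V R V0))) : _).1.1 ⟨f w, hf0 w h⟩
        = ((y : _)).1.1 ⟨f w, hf0 w h⟩ ^ p := by
      rw [SubmonoidClass.coe_pow, Prod.pow_fst, Pi.pow_apply]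
    have hzp : ((φ0.toMonoidHom y ^ p : ↥(GGamma p q ↥V0' (inducedR V' R' V0'))) : _).1.1 ⟨w, h⟩
        = ((φ0.toMonoidHom y : _)).1.1 ⟨w, h⟩ ^ p := by
      rw [SubmonoidClass.coe_pow, Prod.pow_fst, Pi.pow_apply]
    have key : (φ0.toMonoidHom y) ^ p ∈ (vProj p q ↥V0' (inducedR V' R' V0') ⟨w, h⟩).ker
        ↔ y ^ p ∈ (vProj p q ↥V0 (inducedR V R V0) ⟨f w, hf0 w h⟩).ker := by
      rw [← hker0 ⟨w, h⟩, Subgroup.mem_map_equiv]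
      have hsy : φ0.symm ((φ0.toMonoidHom y) ^ p) = y ^ p := by
        rw [map_pow]
        exact congrArg (· ^ p) (φ0.symm_apply_apply y)
      rw [hsy]
    rw [MonoidHom.mem_ker, MonoidHom.mem_ker] at key
    rw [← hzp, ← hyp]
    exact key
  -- Step B : f maps V0' onto V0
  have hf0' : ∀ v : V, v ∈ V0 → f.symm v ∈ V0' := by
    intro v hv
    by_contra hv'
    classical
    set v₀ : ↥V0 := ⟨v, hv⟩ with hv₀
    set a : ↥V0 → DihedralGroup p := fun u => if u = v₀ then DihedralGroup.sr 0 else 1 with ha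
    set b : ↥(inducedR V R V0) → Wgrp p q :=
      fun e => SemidirectProduct.inr (a (e : ↥V0 × ↥V0).1, a (e : ↥V0 × ↥V0).2) with hb
    have hmem : (a, b) ∈ GGamma p q ↥V0 (inducedR V R V0) := by
      intro e
      exact SemidirectProduct.rightHom_inr _
    set x2 : ↥(GGamma p q ↥V0 (inducedR V R V0)) := ⟨(a, b), hmem⟩ with hx2
    have ha2 : ∀ u, a u * a u = 1 := by
      intro u
      by_cases h : u = v₀
      · simp [ha, h, DihedralGroup.sr_mul_self, DihedralGroup.one_def, -DihedralGroup.r_zero]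
      · simp [ha, h]
    have hx2sq : x2 * x2 = 1 := by
      apply Subtype.ext
      apply Prod.ext
      · funext u
        exact ha2 u
      · funext e
        show b e * b e = 1
        rw [hb]
        show SemidirectProduct.inr _ * SemidirectProduct.inr _ = 1
        rw [← map_mul, Prod.mk_mul_mk, ha2, ha2]
        exact map_one _
    have hx2ker : ∀ w : ↥V0',
        x2 ∈ (vProj p q ↥V0 (inducedR V R V0) ⟨f (w : V'), hf0 w w.2⟩).ker := by
      intro w
      show a ⟨f (w : V'), hf0 w w.2⟩ = 1
      have hne : (⟨f (w : V'), hf0 w w.2⟩ : ↥V0) ≠ v₀ := by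
        intro hh
        apply hv'
        have hfv : f (w : V') = v := congrArg Subtype.val hh
        rw [← hfv, Equiv.symm_apply_apply]
        exact w.2
      simp [ha, hne]
    have hz1 : ∀ w : ↥V0', ((φ0 x2 : _) : _).1.1 w = 1 := by
      intro w
      have : φ0 x2 ∈ (vProj p q ↥V0' (inducedR V' R' V0') w).ker := by
        rw [← hker0 w]
        exact Subgroup.mem_map_of_mem _ (hx2ker w)
      exact this
    have hzsq : φ0 x2 * φ0 x2 = 1 := by rw [← map_mul, hx2sq, map_one]
    have hzone : φ0 x2 = 1 := by
      apply Subtype.ext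
      apply Prod.ext
      · funext w
        exact hz1 w
      · funext e
        have hmul : ((φ0 x2 : _) : _).1.2 e * ((φ0 x2 : _) : _).1.2 e = 1 :=
          congrArg
            (fun t : (↥V0' → DihedralGroup p) × (↥(inducedR V' R' V0') → Wgrp p q) => t.2 e)
            (congrArg Subtype.val hzsq)
        have hright : (((φ0 x2 : _) : _).1.2 e).right = 1 := by
          have h' := (φ0 x2).2 e
          rw [hz1, hz1] at h'
          exact h'
        have hleft : (((φ0 x2 : _) : _).1.2 e).left = 1 := by
          have hl := congrArg SemidirectProduct.left hmul
          rw [SemidirectProduct.mul_left, hright, map_one, MulAut.one_apply] at hl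
          exact mult_zmod_sq hq hqo hl
        show ((φ0 x2 : _) : _).1.2 e = 1
        ext
        · exact hleft
        · exact congrArg Prod.fst hright
        · exact congrArg Prod.snd hright
    have hx2one : x2 = 1 := φ0.injective (by rw [hzone, map_one])
    have : a v₀ = 1 := congrArg
      (fun t : (↥V0 → DihedralGroup p) × (↥(inducedR V R V0) → Wgrp p q) => t.1 v₀)
      (congrArg Subtype.val hx2one)
    rw [ha] at this
    simp only [if_pos rfl] at this
    simp [DihedralGroup.one_def, -DihedralGroup.r_zero] at this
  -- Step C : data for the inverse direction
  have hfR' : ∀ a b : V, (a, b) ∈ R ↔ (f.symm a, f.symm b) ∈ R' := by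
    intro a b
    rw [hfR]
    simp
  have hsign' : ∀ (y : ↥(GGamma p q ↥V0' (inducedR V' R' V0'))) (v : V) (h : v ∈ V0),
      dihedralSign p ((φ0.symm.toMonoidHom y : _).1.1 ⟨v, h⟩)
        = dihedralSign p ((y : _).1.1 ⟨f.symm v, hf0' v h⟩) := by
    intro y v h
    have h' := hsign (φ0.symm y) (f.symm v) (hf0' v h)
    have hyy : φ0.toMonoidHom (φ0.symm y) = y := φ0.apply_symm_apply y
    rw [hyy] at h'
    have hidx : (⟨f (f.symm v), hf0 _ (hf0' v h)⟩ : ↥V0) = ⟨v, h⟩ :=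
      Subtype.ext (f.apply_symm_apply v)
    rw [hidx] at h'
    exact h'.symm
  -- Step D : assemble
  set Φ := extHom f hfR hf0 φ0.toMonoidHom hsign with hΦ
  set Ψ := extHom f.symm hfR' hf0' φ0.symm.toMonoidHom hsign' with hΨ
  have hli : ∀ x, Ψ (Φ x) = x :=
    ext_inverse f hfR hf0 φ0.toMonoidHom hsign f.symm hfR' hf0' φ0.symm.toMonoidHom hsign'
      (fun v => f.apply_symm_apply v) (fun y => φ0.symm_apply_apply y)
  have hri : ∀ x, Φ (Ψ x) = x :=
    ext_inverse f.symm hfR' hf0' φ0.symm.toMonoidHom hsign' f hfR hf0 φ0.toMonoidHom hsign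
      (fun w => f.symm_apply_apply w) (fun y => φ0.apply_symm_apply y)
  refine ⟨⟨⟨⇑Φ, ⇑Ψ, hli, hri⟩, fun x y => Φ.map_mul x y⟩, ?_, ?_, ?_, ?_⟩
  · show Continuous ⇑Φ
    exact extHom_continuous f hfR hf0 φ0.toMonoidHom hsign hφ0c
  · show Continuous ⇑Ψ
    exact extHom_continuous f.symm hfR' hf0' φ0.symm.toMonoidHom hsign' hφ0cs
  · intro w
    ext z
    rw [Subgroup.mem_map_equiv, MonoidHom.mem_ker, MonoidHom.mem_ker]
    by_cases h : w ∈ V0'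
    · show extA f.symm hf0' φ0.symm.toMonoidHom z (f w) = 1
        ↔ ((projGGamma p q V' R' V0' z : _) : _).1.1 (⟨w, h⟩ : ↥V0') = 1
      rw [extA, dif_pos (hf0 w h)]
      have key := Subgroup.mem_map_equiv (f := φ0)
        (K := (vProj p q ↥V0 (inducedR V R V0) ⟨f w, hf0 w h⟩).ker)
        (x := projGGamma p q V' R' V0' z)
      rw [hker0 ⟨w, h⟩, MonoidHom.mem_ker, MonoidHom.mem_ker] at key
      exact key.symm
    · have hfw : f w ∉ V0 := by
        intro hh
        apply h
        have := hf0' (f w) hh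
        rwa [Equiv.symm_apply_apply] at this
      show extA f.symm hf0' φ0.symm.toMonoidHom z (f w) = 1
        ↔ vProj p q V' R' w z = 1
      rw [extA, dif_neg hfw, Equiv.symm_apply_apply]
      exact Iff.rfl
  · intro x
    exact extHom_proj f hfR hf0 φ0.toMonoidHom hsign x
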